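/- Let X be a finite set of unit vectors in R^n and let {x₁,...,x_ℓ} be the set of isolable vectors of X. Then there exist unit vectors x₁',...,x_ℓ' such that for each i, |⟨xᵢ', v⟩| < coh(X) for every vector v in ((X minus the isolable vectors) ∪ {x₁',...,x_ℓ'}) other than xᵢ'. -/
import Mathlib

open scoped RealInnerProductSpace
abbrev E (n : ℕ) := EuclideanSpace ℝ (Fin n)
noncomputable def coh {n : ℕ} (X : Set (E n)) : ℝ :=
  sSup {r : ℝ | ∃ x ∈ X, ∃ y ∈ X, x ≠ y ∧ r = |⟪x, y⟫|}
def IsUnitSet {n : ℕ} (X : Set (E n)) : Prop := ∀ x ∈ X, ‖x‖ = 1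
def Isolated {n : ℕ} (X : Set (E n)) (x : E n) : Prop :=
  ∀ y ∈ X, y ≠ x → |⟪x, y⟫| < coh X
def Isolable {n : ℕ} (X : Set (E n)) (x : E n) : Prop :=
  ∀ ε > 0, ∃ x' : E n, ‖x'‖ = 1 ∧ ‖x - x'‖ < ε ∧ ∀ y ∈ X, y ≠ x → |⟪x', y⟫| < coh X
def Grassmannian {n : ℕ} (m : ℕ) (X : Set (E n)) : Prop :=
  IsUnitSet X ∧ X.Finite ∧ X.ncard = m ∧
    ∀ Y : Set (E n), IsUnitSet Y → Y.Finite → Y.ncard = m → coh X ≤ coh Y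

theorem replace_isolable_vectors {n ℓ : ℕ} (X : Set (E n))
    (hfin : X.Finite) (hunit : IsUnitSet X)
    (f : Fin ℓ → E n) (hinj : Function.Injective f)
    (hrange : Set.range f = {x ∈ X | Isolable X x}) :
    ∃ g : Fin ℓ → E n, (∀ i, ‖g i‖ = 1) ∧
      ∀ i : Fin ℓ, ∀ v ∈ (X \ {x ∈ X | Isolable X x}) ∪ Set.range g,
        v ≠ g i → |⟪g i, v⟫| < coh X := by
  have hmemX : ∀ i : Fin ℓ, f i ∈ X ∧ Isolable X (f i) := by
    intro i
    have h : f i ∈ Set.range f := ⟨i, rfl⟩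
    rw [hrange] at h
    exact h
  have aux : ∀ k : ℕ, k ≤ ℓ → ∃ g : Fin ℓ → E n,
      (∀ i, ‖g i‖ = 1) ∧
      (∀ i : Fin ℓ, i.val < k → ∀ y ∈ X, y ≠ f i → |⟪g i, y⟫| < coh X) ∧
      (∀ i j : Fin ℓ, i.val < k → j.val < k → i ≠ j → |⟪g i, g j⟫| < coh X) := by
    intro k
    induction k with
    | zero =>
      intro _
      exact ⟨f, fun i => hunit _ (hmemX i).1,
        fun i hi => absurd hi (by omega), fun i j hi => absurd hi (by omega)⟩
    | succ k ih =>
      intro hk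
      obtain ⟨g, hg1, hg2, hg3⟩ := ih (Nat.le_of_succ_le hk)
      have hkℓ : k < ℓ := hk
      set i₀ : Fin ℓ := ⟨k, hkℓ⟩ with hi₀
      have hcohj : ∀ j : Fin ℓ, j.val < k → |⟪f i₀, g j⟫| < coh X := by
        intro j hj
        have hne : f i₀ ≠ f j := by
          intro h
          have := hinj h
          have : (i₀ : Fin ℓ).val = j.val := by rw [this]
          simp [hi₀] at this
          omega
        have h := hg2 j hj (f i₀) (hmemX i₀).1 hne
        rwa [real_inner_comm] at h
      classical
      obtain ⟨ε, hεpos, hεle⟩ : ∃ ε : ℝ, 0 < ε ∧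
          ∀ j : Fin ℓ, j.val < k → ε ≤ coh X - |⟪f i₀, g j⟫| := by
        by_cases hS : ((Finset.univ : Finset (Fin ℓ)).filter
            (fun j => j.val < k)).Nonempty
        · refine ⟨((Finset.univ : Finset (Fin ℓ)).filter (fun j => j.val < k)).inf'
            hS (fun j => coh X - |⟪f i₀, g j⟫|), ?_, ?_⟩
          · apply Finset.lt_inf'_iff hS (f := fun j => coh X - |⟪f i₀, g j⟫|) |>.2
            intro j hj
            have hjk : j.val < k := (Finset.mem_filter.1 hj).2
            have := hcohj j hjk
            linarith
          · intro j hjk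
            exact Finset.inf'_le (fun j => coh X - |⟪f i₀, g j⟫|)
              (Finset.mem_filter.2 ⟨Finset.mem_univ j, hjk⟩)
        · refine ⟨1, one_pos, fun j hjk => absurd ?_ hS⟩
          exact ⟨j, Finset.mem_filter.2 ⟨Finset.mem_univ _, hjk⟩⟩
      obtain ⟨x', hx'1, hx'2, hx'3⟩ := (hmemX i₀).2 ε hεpos
      have key : ∀ j : Fin ℓ, j.val < k → |⟪x', g j⟫| < coh X := by
        intro j hjk
        have h1 : |⟪x', g j⟫| ≤ |⟪x' - f i₀, g j⟫| + |⟪f i₀, g j⟫| := by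
          have heq : ⟪x', g j⟫ = ⟪x' - f i₀, g j⟫ + ⟪f i₀, g j⟫ := by
            rw [inner_sub_left]; ring
          rw [heq]
          exact abs_add_le _ _
        have h2 : |⟪x' - f i₀, g j⟫| ≤ ‖x' - f i₀‖ * ‖g j‖ := abs_real_inner_le_norm _ _
        have h3 : ‖x' - f i₀‖ < ε := by rwa [norm_sub_rev]
        have h4 : ‖g j‖ = 1 := hg1 j
        have h5 := hεle j hjk
        rw [h4, mul_one] at h2
        linarith
      refine ⟨Function.update g i₀ x', ?_, ?_, ?_⟩
      · intro i
        by_cases h : i = i₀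
        · rw [h, Function.update_self]; exact hx'1
        · rw [Function.update_of_ne h]; exact hg1 i
      · intro i hi y hy hne
        by_cases h : i = i₀
        · subst h
          rw [Function.update_self]
          exact hx'3 y hy hne
        · have hik : i.val < k := by
            have : i.val ≠ k := fun hh => h (Fin.ext (by simp [hi₀, hh]))
            omega
          rw [Function.update_of_ne h]
          exact hg2 i hik y hy hne
      · intro i j hi hj hij
        by_cases h1 : i = i₀ <;> by_cases h2 : j = i₀
        · exact absurd (h1.trans h2.symm) hij
        · subst h1
          have hjk : j.val < k := by
            have : j.val ≠ k := fun hh => h2 (Fin.ext (by simp [hi₀, hh]))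
            omega
          rw [Function.update_self, Function.update_of_ne h2]
          exact key j hjk
        · subst h2
          have hik : i.val < k := by
            have : i.val ≠ k := fun hh => h1 (Fin.ext (by simp [hi₀, hh]))
            omega
          rw [Function.update_self, Function.update_of_ne h1, real_inner_comm]
          exact key i hik
        · have hik : i.val < k := by
            have : i.val ≠ k := fun hh => h1 (Fin.ext (by simp [hi₀, hh]))
            omega
          have hjk : j.val < k := by
            have : j.val ≠ k := fun hh => h2 (Fin.ext (by simp [hi₀, hh]))
            omega
          rw [Function.update_of_ne h1, Function.update_of_ne h2]
          exact hg3 i j hik hjk hij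
  obtain ⟨g, hg1, hg2, hg3⟩ := aux ℓ le_rfl
  refine ⟨g, hg1, ?_⟩
  intro i v hv hne
  rcases hv with hv | hv
  · obtain ⟨hvX, hvnI⟩ := hv
    have hvf : v ≠ f i := by
      intro h
      exact hvnI ⟨hvX, h ▸ (hmemX i).2⟩
    exact hg2 i i.isLt v hvX hvf
  · obtain ⟨j, rfl⟩ := hv
    by_cases hij : i = j
    · exact absurd rfl (hij ▸ hne)
    · exact hg3 i j i.isLt j.isLt hij
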